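/- arXiv:2008.01412 — 2 statements merged into one kernel-verified Lean document; each statement's English description precedes it below -/
import Mathlib

section
/- Let ν be a symmetric measure on ℝ \ {0} with ∫ min(1, y²) ν(dy) < ∞. Suppose there is 0 < θ < 2 with limsup_{y→∞} y^θ ν({u : |u| > y}) < ∞. Then there is a constant C such that V(x) := ∫₀^∞ min(|xy|², 1) ν(dy) satisfies V(x) ≤ C|x|^θ for all |x| ≤ 1. -/
open MeasureTheory Set Filter ENNReal

set_option maxHeartbeats 1000000 in
/-- If `ν` is a symmetric measure on `ℝ \ {0}` integrating `min(1, y²)` and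
`limsup_{y→∞} y^θ ν{|u|>y} < ∞` for some `0 < θ < 2`, then
`V(x) = ∫₀^∞ min(|xy|², 1) ν(dy) ≤ C |x|^θ` for all `|x| ≤ 1`. -/
theorem V_le_of_tail_theta (ν : Measure ℝ) (hzero : ν {0} = 0)
    (hsym : ν.map (fun y => -y) = ν)
    (hint : ∫⁻ y, ENNReal.ofReal (min 1 (y ^ 2)) ∂ν < ⊤)
    (θ : ℝ) (hθ0 : 0 < θ) (hθ2 : θ < 2)
    (htail : Filter.limsup
        (fun y : ℝ => ENNReal.ofReal (y ^ θ) * ν {u : ℝ | y < |u|}) Filter.atTop < ⊤) :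
    ∃ C : ℝ, ∀ x : ℝ, |x| ≤ 1 →
      (∫⁻ y in Ioi (0:ℝ), ENNReal.ofReal (min (|x * y| ^ 2) 1) ∂ν)
        ≤ ENNReal.ofReal (C * |x| ^ θ) := by
  classical
  set T : ℝ → ℝ≥0∞ := fun r => ν {u : ℝ | r < |u|} with hTdef
  -- T 1 is finite
  have hT1 : T 1 < ⊤ := by
    have h1 : T 1 = ∫⁻ _ in {u : ℝ | 1 < |u|}, 1 ∂ν := (setLIntegral_one _).symm
    have h2 : (∫⁻ _ in {u : ℝ | 1 < |u|}, (1:ℝ≥0∞) ∂ν)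
        ≤ ∫⁻ y in {u : ℝ | 1 < |u|}, ENNReal.ofReal (min 1 (y ^ 2)) ∂ν := by
      refine setLIntegral_mono ((measurable_const.min (measurable_id.pow_const 2)).ennreal_ofReal) ?_
      intro y hy
      have hy' : (1:ℝ) < |y| := hy
      have : min 1 (y ^ 2) = 1 := min_eq_left (by nlinarith [sq_abs y])
      rw [this]; simp
    calc T 1 = _ := h1
      _ ≤ _ := h2
      _ ≤ ∫⁻ y, ENNReal.ofReal (min 1 (y ^ 2)) ∂ν := setLIntegral_le_lintegral _ _
      _ < ⊤ := hint
  -- uniform tail bound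
  obtain ⟨M, hM1, hM2⟩ := exists_between htail
  have hev := Filter.eventually_lt_of_limsup_lt hM1
  obtain ⟨R0, hR0⟩ := Filter.eventually_atTop.mp hev
  set R : ℝ := max R0 1 with hRdef
  have hR1 : (1:ℝ) ≤ R := le_max_right _ _
  set B : ℝ≥0∞ := max M (ENNReal.ofReal (R ^ θ) * T 1) with hBdef
  have hBtop : B ≠ ⊤ := by
    refine (max_lt hM2 ?_).ne
    exact ENNReal.mul_lt_top ENNReal.ofReal_lt_top hT1
  have key : ∀ r : ℝ, 1 ≤ r → ENNReal.ofReal (r ^ θ) * T r ≤ B := by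
    intro r hr
    rcases le_total R r with h | h
    · exact le_max_of_le_left (hR0 r (le_trans (le_max_left _ _) h)).le
    · refine le_max_of_le_right (mul_le_mul' ?_ ?_)
      · exact ENNReal.ofReal_le_ofReal (Real.rpow_le_rpow (by linarith) h hθ0.le)
      · exact measure_mono fun u hu => lt_of_le_of_lt hr hu
  have key2 : ∀ r : ℝ, 1 ≤ r → T r ≤ ENNReal.ofReal (r ^ (-θ)) * B := by
    intro r hr
    have hrpos : (0:ℝ) < r := lt_of_lt_of_le one_pos hr
    have h1 : ENNReal.ofReal (r ^ (-θ)) * ENNReal.ofReal (r ^ θ) = 1 := by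
      rw [← ENNReal.ofReal_mul (Real.rpow_nonneg hrpos.le _), ← Real.rpow_add hrpos]
      simp
    calc T r = ENNReal.ofReal (r ^ (-θ)) * ENNReal.ofReal (r ^ θ) * T r := by
          rw [h1, one_mul]
      _ = ENNReal.ofReal (r ^ (-θ)) * (ENNReal.ofReal (r ^ θ) * T r) := mul_assoc _ _ _
      _ ≤ _ := mul_le_mul_right (key r hr) _
  set I : ℝ≥0∞ := ∫⁻ y, ENNReal.ofReal (min 1 (y ^ 2)) ∂ν with hIdef
  set q : ℝ := (2:ℝ) ^ (2 - θ) with hqdef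
  have hq1 : 1 < q :=
    (Real.one_lt_rpow_iff_of_pos two_pos).mpr (Or.inl ⟨one_lt_two, by linarith⟩)
  set c₂ : ℝ := 4 * (2:ℝ) ^ (2 - θ) / (q - 1) with hc₂def
  have hc₂0 : 0 ≤ c₂ := by
    apply div_nonneg _ (by linarith)
    positivity
  set E : ℝ≥0∞ := I + B * ENNReal.ofReal c₂ + B with hEdef
  have hEtop : E ≠ ⊤ := by
    rw [hEdef]
    refine (ENNReal.add_ne_top.mpr ⟨ENNReal.add_ne_top.mpr ⟨hint.ne, ?_⟩, hBtop⟩)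
    exact ENNReal.mul_ne_top hBtop ENNReal.ofReal_ne_top
  refine ⟨E.toReal, ?_⟩
  intro x hx
  by_cases hx0 : x = 0
  · subst hx0
    simp [Real.zero_rpow hθ0.ne']
  set a : ℝ := |x| with hadef
  have ha0 : 0 < a := abs_pos.mpr hx0
  have ha1 : a ≤ 1 := hx
  set r : ℝ := a⁻¹ with hrdef
  have hr1 : (1:ℝ) ≤ r := (one_le_inv₀ ha0).mpr ha1
  have hrpos : (0:ℝ) < r := lt_of_lt_of_le one_pos hr1
  -- choose K minimal with r ≤ 2^K
  have hex : ∃ n : ℕ, r ≤ (2:ℝ) ^ n := by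
    obtain ⟨n, hn⟩ := pow_unbounded_of_one_lt r (one_lt_two (α := ℝ))
    exact ⟨n, hn.le⟩
  set K : ℕ := Nat.find hex with hKdef
  have hK1 : r ≤ (2:ℝ) ^ K := Nat.find_spec hex
  have hK2 : (2:ℝ) ^ K ≤ 2 * r := by
    rcases Nat.eq_zero_or_pos K with h0 | hpos
    · rw [h0]; simpa using by linarith
    · have hmin := Nat.find_min hex (Nat.sub_lt hpos one_pos)
      push_neg at hmin
      have hmin' : (2:ℝ) ^ (K - 1) < r := hmin
      have hKK : K - 1 + 1 = K := Nat.succ_pred_eq_of_pos hpos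
      have h2K : (2:ℝ) ^ K = 2 ^ (K - 1) * 2 := by rw [← pow_succ, hKK]
      rw [h2K]; nlinarith
  -- split the integral
  have hsplit : (∫⁻ y in Ioi (0:ℝ), ENNReal.ofReal (min (|x * y| ^ 2) 1) ∂ν)
      ≤ (∫⁻ y in Ioc (0:ℝ) 1, ENNReal.ofReal (min (|x * y| ^ 2) 1) ∂ν)
      + (∫⁻ y in Ioc (1:ℝ) r, ENNReal.ofReal (min (|x * y| ^ 2) 1) ∂ν)
      + (∫⁻ y in Ioi r, ENNReal.ofReal (min (|x * y| ^ 2) 1) ∂ν) := by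
    have hU : Ioi (0:ℝ) = (Ioc 0 1 ∪ Ioc 1 r) ∪ Ioi r := by
      rw [Ioc_union_Ioc_eq_Ioc zero_le_one hr1, Ioc_union_Ioi_eq_Ioi hrpos.le]
    rw [hU]
    exact (lintegral_union_le _ _ _).trans (add_le_add_left (lintegral_union_le _ _ _) _)
  -- piece 1
  have hx2a : x ^ 2 ≤ a ^ θ := by
    have h1 : a ^ (2:ℝ) ≤ a ^ θ := Real.rpow_le_rpow_of_exponent_ge ha0 ha1 hθ2.le
    calc x ^ 2 = a ^ (2:ℕ) := (sq_abs x).symm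
      _ = a ^ (2:ℝ) := by rw [← Real.rpow_natCast a 2]; norm_num
      _ ≤ a ^ θ := h1
  have hP1 : (∫⁻ y in Ioc (0:ℝ) 1, ENNReal.ofReal (min (|x * y| ^ 2) 1) ∂ν)
      ≤ I * ENNReal.ofReal (a ^ θ) := by
    have hmono : ∀ y ∈ Ioc (0:ℝ) 1, ENNReal.ofReal (min (|x * y| ^ 2) 1)
        ≤ ENNReal.ofReal (a ^ θ) * ENNReal.ofReal (min 1 (y ^ 2)) := by
      intro y hy
      rw [← ENNReal.ofReal_mul (Real.rpow_nonneg (abs_nonneg x) _)]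
      apply ENNReal.ofReal_le_ofReal
      have hy2 : min 1 (y ^ 2) = y ^ 2 := min_eq_right (by nlinarith [hy.1, hy.2])
      rw [hy2]
      have h2 : |x * y| ^ 2 = x ^ 2 * y ^ 2 := by
        rw [abs_mul, mul_pow, sq_abs, sq_abs]
      calc min (|x * y| ^ 2) 1 ≤ |x * y| ^ 2 := min_le_left _ _
        _ = x ^ 2 * y ^ 2 := h2
        _ ≤ a ^ θ * y ^ 2 := by nlinarith [sq_nonneg y]
    calc (∫⁻ y in Ioc (0:ℝ) 1, ENNReal.ofReal (min (|x * y| ^ 2) 1) ∂ν)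
        ≤ ∫⁻ y in Ioc (0:ℝ) 1, ENNReal.ofReal (a ^ θ) * ENNReal.ofReal (min 1 (y ^ 2)) ∂ν :=
          setLIntegral_mono (measurable_const.mul
            ((measurable_const.min (measurable_id.pow_const 2)).ennreal_ofReal)) hmono
      _ = ENNReal.ofReal (a ^ θ) * ∫⁻ y in Ioc (0:ℝ) 1, ENNReal.ofReal (min 1 (y ^ 2)) ∂ν :=
          lintegral_const_mul' _ _ ENNReal.ofReal_ne_top
      _ ≤ ENNReal.ofReal (a ^ θ) * I :=
          mul_le_mul_right (setLIntegral_le_lintegral _ _) _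
      _ = I * ENNReal.ofReal (a ^ θ) := mul_comm _ _
  -- piece 3
  have hra : r ^ (-θ) = a ^ θ := by
    rw [Real.rpow_neg (inv_pos.mpr ha0).le, Real.inv_rpow ha0.le, inv_inv]
  have hP3 : (∫⁻ y in Ioi r, ENNReal.ofReal (min (|x * y| ^ 2) 1) ∂ν)
      ≤ B * ENNReal.ofReal (a ^ θ) := by
    calc (∫⁻ y in Ioi r, ENNReal.ofReal (min (|x * y| ^ 2) 1) ∂ν)
        ≤ ∫⁻ _ in Ioi r, (1:ℝ≥0∞) ∂ν :=
          lintegral_mono fun y => ENNReal.ofReal_le_one.mpr (min_le_right _ _)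
      _ = ν (Ioi r) := setLIntegral_one _
      _ ≤ T r := measure_mono fun y hy => lt_of_lt_of_le hy (le_abs_self y)
      _ ≤ ENNReal.ofReal (r ^ (-θ)) * B := key2 r hr1
      _ = B * ENNReal.ofReal (a ^ θ) := by rw [hra, mul_comm]
  -- piece 2 : dyadic decomposition
  have hdyad : ∀ n : ℕ, (∫⁻ y in Ioc (1:ℝ) ((2:ℝ) ^ n), ENNReal.ofReal (x ^ 2 * y ^ 2) ∂ν)
      ≤ ∑ k ∈ Finset.range n, ENNReal.ofReal (x ^ 2 * ((2:ℝ) ^ (k + 1)) ^ 2) * T ((2:ℝ) ^ k) := by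
    intro n
    induction n with
    | zero => simp
    | succ n ih =>
      have h1n : (1:ℝ) ≤ (2:ℝ) ^ n := one_le_pow₀ one_le_two
      have hsub : Ioc (1:ℝ) ((2:ℝ) ^ (n + 1)) ⊆ Ioc 1 ((2:ℝ) ^ n) ∪ Ioc ((2:ℝ) ^ n) ((2:ℝ) ^ (n + 1)) := by
        rw [Ioc_union_Ioc_eq_Ioc h1n (pow_le_pow_right₀ one_le_two (Nat.le_succ n))]
      have hpiece : (∫⁻ y in Ioc ((2:ℝ) ^ n) ((2:ℝ) ^ (n + 1)), ENNReal.ofReal (x ^ 2 * y ^ 2) ∂ν)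
          ≤ ENNReal.ofReal (x ^ 2 * ((2:ℝ) ^ (n + 1)) ^ 2) * T ((2:ℝ) ^ n) := by
        calc (∫⁻ y in Ioc ((2:ℝ) ^ n) ((2:ℝ) ^ (n + 1)), ENNReal.ofReal (x ^ 2 * y ^ 2) ∂ν)
            ≤ ∫⁻ _ in Ioc ((2:ℝ) ^ n) ((2:ℝ) ^ (n + 1)),
                ENNReal.ofReal (x ^ 2 * ((2:ℝ) ^ (n + 1)) ^ 2) ∂ν := by
              refine setLIntegral_mono measurable_const ?_
              intro y hy
              apply ENNReal.ofReal_le_ofReal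
              have h0y : (0:ℝ) < y := lt_of_le_of_lt (by positivity) hy.1
              have hy2 : y ^ 2 ≤ ((2:ℝ) ^ (n + 1)) ^ 2 := by nlinarith [h0y, hy.2]
              exact mul_le_mul_of_nonneg_left hy2 (sq_nonneg x)
          _ = ENNReal.ofReal (x ^ 2 * ((2:ℝ) ^ (n + 1)) ^ 2) * ν (Ioc ((2:ℝ) ^ n) ((2:ℝ) ^ (n + 1))) :=
              setLIntegral_const _ _
          _ ≤ _ := by
              refine mul_le_mul_right (measure_mono fun y hy => ?_) _
              exact lt_of_lt_of_le hy.1 (le_abs_self y)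
      calc (∫⁻ y in Ioc (1:ℝ) ((2:ℝ) ^ (n + 1)), ENNReal.ofReal (x ^ 2 * y ^ 2) ∂ν)
          ≤ ∫⁻ y in Ioc (1:ℝ) ((2:ℝ) ^ n) ∪ Ioc ((2:ℝ) ^ n) ((2:ℝ) ^ (n + 1)),
              ENNReal.ofReal (x ^ 2 * y ^ 2) ∂ν := lintegral_mono_set hsub
        _ ≤ _ + _ := lintegral_union_le _ _ _
        _ ≤ (∑ k ∈ Finset.range n, ENNReal.ofReal (x ^ 2 * ((2:ℝ) ^ (k + 1)) ^ 2) * T ((2:ℝ) ^ k))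
            + ENNReal.ofReal (x ^ 2 * ((2:ℝ) ^ (n + 1)) ^ 2) * T ((2:ℝ) ^ n) := add_le_add ih hpiece
        _ = _ := (Finset.sum_range_succ _ _).symm
  -- bound each term of the sum
  have hterm : ∀ k : ℕ, ENNReal.ofReal (x ^ 2 * ((2:ℝ) ^ (k + 1)) ^ 2) * T ((2:ℝ) ^ k)
      ≤ ENNReal.ofReal (x ^ 2 * (4 * q ^ k)) * B := by
    intro k
    have h2k : (1:ℝ) ≤ (2:ℝ) ^ k := one_le_pow₀ one_le_two
    have heq : x ^ 2 * ((2:ℝ) ^ (k + 1)) ^ 2 * ((2:ℝ) ^ k) ^ (-θ) = x ^ 2 * (4 * q ^ k) := by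
      have e1 : ((2:ℝ) ^ (k + 1)) ^ 2 = (2:ℝ) ^ (((2 * (k + 1) : ℕ) : ℝ)) := by
        rw [Real.rpow_natCast, ← pow_mul]; ring_nf
      have e2 : ((2:ℝ) ^ k) ^ (-θ) = (2:ℝ) ^ ((k : ℝ) * (-θ)) := by
        rw [← Real.rpow_natCast 2 k, ← Real.rpow_mul (by norm_num : (0:ℝ) ≤ 2)]
      have e3 : q ^ k = (2:ℝ) ^ ((2 - θ) * (k : ℝ)) := by
        rw [hqdef, ← Real.rpow_natCast ((2:ℝ) ^ (2 - θ)) k,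
          ← Real.rpow_mul (by norm_num : (0:ℝ) ≤ 2)]
      have e4 : (4:ℝ) = (2:ℝ) ^ ((2:ℕ) : ℝ) := by
        rw [Real.rpow_natCast]; norm_num
      rw [e1, e2, e3, e4, mul_assoc, ← Real.rpow_add two_pos, ← Real.rpow_add two_pos]
      congr 2
      push_cast
      ring
    calc ENNReal.ofReal (x ^ 2 * ((2:ℝ) ^ (k + 1)) ^ 2) * T ((2:ℝ) ^ k)
        ≤ ENNReal.ofReal (x ^ 2 * ((2:ℝ) ^ (k + 1)) ^ 2)
            * (ENNReal.ofReal (((2:ℝ) ^ k) ^ (-θ)) * B) := mul_le_mul_right (key2 _ h2k) _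
      _ = ENNReal.ofReal (x ^ 2 * ((2:ℝ) ^ (k + 1)) ^ 2 * ((2:ℝ) ^ k) ^ (-θ)) * B := by
          rw [← mul_assoc, ← ENNReal.ofReal_mul (by positivity)]
      _ = _ := by rw [heq]
  -- geometric series bound
  have hx2aux : x ^ 2 = a ^ (2:ℝ) := by
    rw [show a ^ (2:ℝ) = a ^ (2:ℕ) by rw [← Real.rpow_natCast a 2]; norm_num]
    exact (sq_abs x).symm
  have hxa : x ^ 2 * a ^ (θ - 2) = a ^ θ := by
    rw [hx2aux, ← Real.rpow_add ha0]
    congr 1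
    ring
  have hsumle : ∑ k ∈ Finset.range K, x ^ 2 * (4 * q ^ k) ≤ c₂ * a ^ θ := by
    have hgeom : ∑ k ∈ Finset.range K, q ^ k = (q ^ K - 1) / (q - 1) := geom_sum_eq hq1.ne' K
    have hqK : q ^ K ≤ (2 * r) ^ (2 - θ) := by
      have e3 : q ^ K = ((2:ℝ) ^ K) ^ (2 - θ) := by
        rw [hqdef, ← Real.rpow_natCast ((2:ℝ) ^ (2 - θ)) K,
          ← Real.rpow_mul (by norm_num : (0:ℝ) ≤ 2), mul_comm,
          Real.rpow_mul (by norm_num : (0:ℝ) ≤ 2), Real.rpow_natCast]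
      rw [e3]
      exact Real.rpow_le_rpow (by positivity) hK2 (by linarith)
    have h2r : (2 * r) ^ (2 - θ) = (2:ℝ) ^ (2 - θ) * a ^ (θ - 2) := by
      rw [Real.mul_rpow (by norm_num) hrpos.le]
      congr 1
      rw [Real.inv_rpow ha0.le, ← Real.rpow_neg ha0.le]
      norm_num
    have hq1' : (0:ℝ) < q - 1 := by linarith
    have hs1 : ∑ k ∈ Finset.range K, x ^ 2 * (4 * q ^ k)
        = x ^ 2 * 4 * ((q ^ K - 1) / (q - 1)) := by
      rw [← hgeom, Finset.mul_sum]
      exact Finset.sum_congr rfl fun k _ => by ring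
    rw [hs1]
    have hstep : x ^ 2 * 4 * ((q ^ K - 1) / (q - 1))
        ≤ x ^ 2 * 4 * ((2 * r) ^ (2 - θ) / (q - 1)) := by
      have h1 : (q ^ K - 1) / (q - 1) ≤ (2 * r) ^ (2 - θ) / (q - 1) :=
        div_le_div_of_nonneg_right (by linarith [hqK]) hq1'.le
      exact mul_le_mul_of_nonneg_left h1 (by positivity)
    refine hstep.trans (le_of_eq ?_)
    rw [h2r, ← hxa, hc₂def]
    field_simp
  -- piece 2
  have hP2 : (∫⁻ y in Ioc (1:ℝ) r, ENNReal.ofReal (min (|x * y| ^ 2) 1) ∂ν)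
      ≤ B * ENNReal.ofReal c₂ * ENNReal.ofReal (a ^ θ) := by
    calc (∫⁻ y in Ioc (1:ℝ) r, ENNReal.ofReal (min (|x * y| ^ 2) 1) ∂ν)
        ≤ ∫⁻ y in Ioc (1:ℝ) r, ENNReal.ofReal (x ^ 2 * y ^ 2) ∂ν := by
          refine lintegral_mono fun y => ENNReal.ofReal_le_ofReal ?_
          calc min (|x * y| ^ 2) 1 ≤ |x * y| ^ 2 := min_le_left _ _
            _ = x ^ 2 * y ^ 2 := by rw [abs_mul, mul_pow, sq_abs, sq_abs]
      _ ≤ ∫⁻ y in Ioc (1:ℝ) ((2:ℝ) ^ K), ENNReal.ofReal (x ^ 2 * y ^ 2) ∂ν :=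
          lintegral_mono_set (Ioc_subset_Ioc_right hK1)
      _ ≤ ∑ k ∈ Finset.range K, ENNReal.ofReal (x ^ 2 * ((2:ℝ) ^ (k + 1)) ^ 2) * T ((2:ℝ) ^ k) :=
          hdyad K
      _ ≤ ∑ k ∈ Finset.range K, ENNReal.ofReal (x ^ 2 * (4 * q ^ k)) * B :=
          Finset.sum_le_sum fun k _ => hterm k
      _ = (∑ k ∈ Finset.range K, ENNReal.ofReal (x ^ 2 * (4 * q ^ k))) * B :=
          (Finset.sum_mul _ _ _).symm
      _ = ENNReal.ofReal (∑ k ∈ Finset.range K, x ^ 2 * (4 * q ^ k)) * B := by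
          rw [ENNReal.ofReal_sum_of_nonneg fun k _ => by positivity]
      _ ≤ ENNReal.ofReal (c₂ * a ^ θ) * B :=
          mul_le_mul_left (ENNReal.ofReal_le_ofReal hsumle) _
      _ = B * ENNReal.ofReal c₂ * ENNReal.ofReal (a ^ θ) := by
          rw [ENNReal.ofReal_mul hc₂0]; ring
  -- put everything together
  calc (∫⁻ y in Ioi (0:ℝ), ENNReal.ofReal (min (|x * y| ^ 2) 1) ∂ν)
      ≤ _ := hsplit
    _ ≤ I * ENNReal.ofReal (a ^ θ) + B * ENNReal.ofReal c₂ * ENNReal.ofReal (a ^ θ)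
        + B * ENNReal.ofReal (a ^ θ) := add_le_add (add_le_add hP1 hP2) hP3
    _ = E * ENNReal.ofReal (a ^ θ) := by rw [hEdef]; ring
    _ = ENNReal.ofReal (E.toReal * a ^ θ) := by
        rw [ENNReal.ofReal_mul ENNReal.toReal_nonneg, ENNReal.ofReal_toReal hEtop]
end

section
/- Let h(s) = ‖s‖^{dα} on ℝ^d with α < 1. There exist constants C > 0 and R > 0 such that for all y ∈ ℝ^d with ‖y‖ ≥ R, the rectangular unit increment satisfies |Δ₁h(y)| ≤ C ‖y‖^{d(α−1)}. -/
open MeasureTheory Set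

/-- Euclidean norm on `ℝ^d`. -/
noncomputable def euclNorm {d : ℕ} (x : Fin d → ℝ) : ℝ := Real.sqrt (∑ i, (x i) ^ 2)

/-- Rectangular increment of `g` over the cube `[x, x + r·1]`:
`Δ_r g(x) = ∑_{ε ∈ {0,1}^d} (−1)^{d+∑ε_j} g(x + rε)`. -/
noncomputable def rinc {d : ℕ} (g : (Fin d → ℝ) → ℝ) (r : ℝ) (x : Fin d → ℝ) : ℝ :=
  ∑ ε : Fin d → Bool,
    (-1 : ℝ) ^ (d + (Finset.univ.filter (fun i => ε i)).card) *
      g (x + fun i => if ε i then r else 0)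

namespace RP
open Finset
variable {d : ℕ}

structure Term (d : ℕ) where
  a : ℝ
  γ : Fin d → ℕ
  β : ℝ

def N (x : Fin d → ℝ) : ℝ := ∑ i, x i ^ 2

noncomputable def Term.eval (T : Term d) (x : Fin d → ℝ) : ℝ :=
  T.a * (∏ i, x i ^ T.γ i) * N x ^ T.β

noncomputable def evalL (L : List (Term d)) (x : Fin d → ℝ) : ℝ :=
  (L.map (·.eval x)).sum

def derivTerm (i : Fin d) (T : Term d) : List (Term d) :=
  [⟨T.a * T.γ i, Function.update T.γ i (T.γ i - 1), T.β⟩,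
   ⟨2 * T.a * T.β, Function.update T.γ i (T.γ i + 1), T.β - 1⟩]

def derivL (i : Fin d) (L : List (Term d)) : List (Term d) := L.flatMap (derivTerm i)

lemma N_nonneg (x : Fin d → ℝ) : 0 ≤ N x := Finset.sum_nonneg fun i _ => sq_nonneg _

lemma N_update (x : Fin d → ℝ) (i : Fin d) (u : ℝ) :
    N (Function.update x i u) = u ^ 2 + (N x - x i ^ 2) := by
  have h : (fun j => (Function.update x i u j) ^ 2)
      = Function.update (fun j => x j ^ 2) i (u ^ 2) := by
    funext j
    by_cases hj : j = i
    · subst hj; simp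
    · simp [Function.update_of_ne hj]
  rw [N, h, Finset.sum_update_of_mem (Finset.mem_univ i), ← Finset.erase_eq,
    Finset.sum_erase_eq_sub (Finset.mem_univ i)]
  rfl

lemma prod_update (x : Fin d → ℝ) (γ : Fin d → ℕ) (i : Fin d) (u : ℝ) :
    (∏ j, (Function.update x i u j) ^ γ j)
      = u ^ γ i * ∏ j ∈ Finset.univ.erase i, x j ^ γ j := by
  have h : (fun j => (Function.update x i u j) ^ γ j)
      = Function.update (fun j => x j ^ γ j) i (u ^ γ i) := by
    funext j
    by_cases hj : j = i
    · subst hj; simp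
    · simp [Function.update_of_ne hj]
  rw [h, Finset.prod_update_of_mem (Finset.mem_univ i), ← Finset.erase_eq]

lemma prod_pow_update (x : Fin d → ℝ) (γ : Fin d → ℕ) (i : Fin d) (m : ℕ) :
    (∏ j, x j ^ (Function.update γ i m) j)
      = x i ^ m * ∏ j ∈ Finset.univ.erase i, x j ^ γ j := by
  rw [← Finset.prod_erase_mul _ _ (Finset.mem_univ i), Function.update_self, mul_comm]
  congr 1
  apply Finset.prod_congr rfl
  intro j hj
  rw [Function.update_of_ne (Finset.ne_of_mem_erase hj)]

lemma hasDerivAt_termEval (T : Term d) (i : Fin d) (x : Fin d → ℝ) (hx : 0 < N x) :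
    HasDerivAt (fun u => T.eval (Function.update x i u)) (evalL (derivTerm i T) x) (x i) := by
  set c : ℝ := N x - x i ^ 2 with hc
  set P : ℝ := ∏ j ∈ Finset.univ.erase i, x j ^ T.γ j with hP
  have hfun : ∀ u, T.eval (Function.update x i u)
      = T.a * (u ^ T.γ i * P) * (u ^ 2 + c) ^ T.β := by
    intro u
    rw [Term.eval, N_update, prod_update]
  have hbase : x i ^ 2 + c = N x := by ring
  have h1 : HasDerivAt (fun u : ℝ => u ^ T.γ i) ((T.γ i : ℝ) * x i ^ (T.γ i - 1)) (x i) :=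
    hasDerivAt_pow _ _
  have h2 : HasDerivAt (fun u : ℝ => u ^ 2 + c) (2 * x i) (x i) := by
    simpa using (hasDerivAt_pow 2 (x i)).add_const c
  have h3 : HasDerivAt (fun u : ℝ => (u ^ 2 + c) ^ T.β)
      ((2 * x i) * T.β * (x i ^ 2 + c) ^ (T.β - 1)) (x i) := by
    apply h2.rpow_const
    left; rw [hbase]; exact ne_of_gt hx
  have h4 := ((h1.mul_const P).const_mul T.a).mul h3
  have heq : (fun u => T.eval (Function.update x i u))
      = fun u => T.a * (u ^ T.γ i * P) * (u ^ 2 + c) ^ T.β := funext hfun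
  rw [heq]
  convert h4 using 1
  all_goals try rfl
  rw [hbase]
  rw [evalL]
  simp only [derivTerm, List.map_cons, List.map_nil, List.sum_cons, List.sum_nil, add_zero]
  simp only [Term.eval, prod_pow_update, ← hP]
  rw [pow_succ]
  ring

lemma evalL_append (L₁ L₂ : List (Term d)) (x) :
    evalL (L₁ ++ L₂) x = evalL L₁ x + evalL L₂ x := by
  simp [evalL]

lemma hasDerivAt_evalL (L : List (Term d)) (i : Fin d) (x : Fin d → ℝ) (hx : 0 < N x) :
    HasDerivAt (fun u => evalL L (Function.update x i u)) (evalL (derivL i L) x) (x i) := by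
  induction L with
  | nil => simpa [evalL, derivL] using hasDerivAt_const (x i) (0:ℝ)
  | cons T L ih =>
      have h1 := hasDerivAt_termEval T i x hx
      have : derivL i (T :: L) = derivTerm i T ++ derivL i L := by simp [derivL]
      rw [this, evalL_append]
      have : (fun u => evalL (T :: L) (Function.update x i u))
          = fun u => T.eval (Function.update x i u) + evalL L (Function.update x i u) := by
        funext u; simp [evalL]
      rw [this]
      exact h1.add ih

def ind (t : Finset (Fin d)) : Fin d → ℝ := fun i => if i ∈ t then 1 else 0

noncomputable def D (s : Finset (Fin d)) (g : (Fin d → ℝ) → ℝ) (x : Fin d → ℝ) : ℝ :=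
  ∑ t ∈ s.powerset, (-1 : ℝ) ^ (s.card + t.card) * g (x + ind t)

lemma D_empty (g : (Fin d → ℝ) → ℝ) (x) : D ∅ g x = g x := by
  have : x + ind (∅ : Finset (Fin d)) = x := by funext j; simp [ind]
  simp [D, this]

lemma D_insert {a : Fin d} {s : Finset (Fin d)} (ha : a ∉ s) (g : (Fin d → ℝ) → ℝ) (x) :
    D (insert a s) g x = D s g (x + ind {a}) - D s g x := by
  rw [D, Finset.powerset_insert, Finset.sum_union]
  · have h1 : ∑ t ∈ Finset.image (insert a) s.powerset,
        (-1:ℝ) ^ ((insert a s).card + t.card) * g (x + ind t)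
        = ∑ t ∈ s.powerset, (-1:ℝ) ^ (s.card + t.card) * g ((x + ind {a}) + ind t) := by
      rw [Finset.sum_image]
      · apply Finset.sum_congr rfl
        intro t ht
        rw [Finset.mem_powerset] at ht
        have hat : a ∉ t := fun h => ha (ht h)
        have hc : (insert a t).card = t.card + 1 := Finset.card_insert_of_notMem hat
        have hcs : (insert a s).card = s.card + 1 := Finset.card_insert_of_notMem ha
        have hind : x + ind (insert a t) = (x + ind {a}) + ind t := by
          funext j
          by_cases hj : j = a
          · subst hj; simp [ind, hat]
          · simp [ind, Finset.mem_insert, hj]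
        rw [hind, hc, hcs]
        ring_nf
      · intro t₁ h₁ t₂ h₂ he
        rw [Finset.mem_coe, Finset.mem_powerset] at h₁ h₂
        have e1 : t₁ = (insert a t₁).erase a := by
          rw [Finset.erase_insert (fun h => ha (h₁ h))]
        rw [e1, he, Finset.erase_insert (fun h => ha (h₂ h))]
    have h2 : ∑ t ∈ s.powerset, (-1:ℝ) ^ ((insert a s).card + t.card) * g (x + ind t)
        = - ∑ t ∈ s.powerset, (-1:ℝ) ^ (s.card + t.card) * g (x + ind t) := by
      rw [← Finset.sum_neg_distrib]
      apply Finset.sum_congr rfl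
      intro t ht
      rw [Finset.card_insert_of_notMem ha]
      ring_nf
    rw [h1, h2, D, D]
    ring
  · rw [Finset.disjoint_left]
    intro t ht hti
    rw [Finset.mem_powerset] at ht
    rw [Finset.mem_image] at hti
    obtain ⟨u, _, rfl⟩ := hti
    exact ha (ht (Finset.mem_insert_self a u))
lemma step {a : Fin d} {s : Finset (Fin d)} (ha : a ∉ s) (L : List (Term d)) (x : Fin d → ℝ)
    (hpos : ∀ z : Fin d → ℝ, (∀ i, z i ∈ Icc (x i) (x i + 1)) → 0 < N z) :
    ∃ t ∈ Ioo (0:ℝ) 1, D (insert a s) (evalL L) x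
      = D s (evalL (derivL a L)) (Function.update x a (x a + t)) := by
  set ψ : ℝ → ℝ := fun u => D s (evalL L) (Function.update x a u) with hψ
  set ψ' : ℝ → ℝ := fun u => D s (evalL (derivL a L)) (Function.update x a u) with hψ'
  have key : ∀ u ∈ Icc (x a) (x a + 1), HasDerivAt ψ (ψ' u) u := by
    intro u hu
    have hterm : ∀ t ∈ s.powerset, HasDerivAt
        (fun v => (-1:ℝ) ^ (s.card + t.card) * evalL L (Function.update x a v + ind t))
        ((-1:ℝ) ^ (s.card + t.card) * evalL (derivL a L) (Function.update x a u + ind t)) u := by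
      intro t ht
      rw [Finset.mem_powerset] at ht
      have hat : a ∉ t := fun h => ha (ht h)
      have hz : ∀ v : ℝ, Function.update x a v + ind t
          = Function.update (x + ind t) a v := by
        intro v; funext j
        by_cases hj : j = a
        · subst hj; simp [ind, hat]
        · simp [Function.update_of_ne hj, ind]
      set z : Fin d → ℝ := Function.update (x + ind t) a u with hzdef
      have hza : z a = u := by simp [hzdef]
      have hNz : 0 < N z := by
        apply hpos
        intro i
        by_cases hi : i = a
        · subst hi; rw [hza]; exact hu
        · rw [hzdef]
          rw [Function.update_of_ne hi]
          simp only [Pi.add_apply, ind]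
          constructor
          · by_cases h : i ∈ t <;> simp [h] <;> linarith
          · by_cases h : i ∈ t <;> simp [h] <;> linarith
      have := hasDerivAt_evalL L a z hNz
      rw [hza] at this
      simp only [hzdef, Function.update_idem] at this
      simp only [hz]
      rw [← hzdef]
      exact this.const_mul _
    have : HasDerivAt (fun v => ∑ t ∈ s.powerset,
        (-1:ℝ) ^ (s.card + t.card) * evalL L (Function.update x a v + ind t))
        (∑ t ∈ s.powerset,
        (-1:ℝ) ^ (s.card + t.card) * evalL (derivL a L) (Function.update x a u + ind t)) u :=
      HasDerivAt.fun_sum hterm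
    exact this
  have hlt : x a < x a + 1 := by linarith
  obtain ⟨c, hc, hceq⟩ := exists_hasDerivAt_eq_slope ψ ψ' hlt
    (fun u hu => (key u hu).continuousAt.continuousWithinAt)
    (fun u hu => key u (Ioo_subset_Icc_self hu))
  refine ⟨c - x a, ⟨by linarith [hc.1], by linarith [hc.2]⟩, ?_⟩
  have harg1 : Function.update x a (x a + (c - x a)) = Function.update x a c := by
    congr 1; ring
  have harg2 : Function.update x a (x a + 1) = x + ind ({a} : Finset (Fin d)) := by
    funext j
    by_cases hj : j = a
    · subst hj; simp [ind]
    · simp [Function.update_of_ne hj, ind, hj]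
  have hψ1 : ψ (x a + 1) = D s (evalL L) (x + ind {a}) := by
    show D s (evalL L) (Function.update x a (x a + 1)) = _
    rw [harg2]
  have hψ0 : ψ (x a) = D s (evalL L) x := by
    show D s (evalL L) (Function.update x a (x a)) = _
    rw [Function.update_eq_self]
  have hψ'c : ψ' c = D s (evalL (derivL a L)) (Function.update x a c) := rfl
  rw [D_insert ha, ← hψ1, ← hψ0, harg1, ← hψ'c, hceq]
  have h4 : x a + 1 - x a = 1 := by ring
  rw [h4, div_one]
def Term.wt (T : Term d) (w : ℝ) : Prop :=
  T.a = 0 ∨ ((∑ i, T.γ i : ℕ) : ℝ) + 2 * T.β = w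

lemma wt_derivTerm {T : Term d} {w : ℝ} (hT : T.wt w) (i : Fin d) :
    ∀ T' ∈ derivTerm i T, T'.wt (w - 1) := by
  intro T' hT'
  rcases hT with h0 | hw
  · simp only [derivTerm, List.mem_cons, List.mem_singleton] at hT'
    rcases hT' with rfl | rfl | h
    · left; simp [h0]
    · left; simp [h0]
    · cases h
  · simp only [derivTerm, List.mem_cons, List.mem_singleton] at hT'
    rcases hT' with rfl | rfl | h
    · by_cases hγ : T.γ i = 0
      · left; simp [hγ]
      · right
        simp only
        have hesum : ∑ j, T.γ j = T.γ i + ∑ j ∈ Finset.univ.erase i, T.γ j :=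
          (Finset.add_sum_erase _ _ (Finset.mem_univ i)).symm
        rw [Finset.erase_eq] at hesum
        have hsum : ∑ j, Function.update T.γ i (T.γ i - 1) j = (∑ j, T.γ j) - 1 := by
          rw [Finset.sum_update_of_mem (Finset.mem_univ i)]
          omega
        rw [hsum]
        have h1 : (1:ℕ) ≤ ∑ j, T.γ j := by
          calc 1 ≤ T.γ i := Nat.one_le_iff_ne_zero.mpr hγ
          _ ≤ ∑ j, T.γ j := Finset.single_le_sum (fun j _ => Nat.zero_le _) (Finset.mem_univ i)
        push_cast [Nat.cast_sub h1] at hw ⊢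
        linarith
    · right
      simp only
      have hesum : ∑ j, T.γ j = T.γ i + ∑ j ∈ Finset.univ.erase i, T.γ j :=
        (Finset.add_sum_erase _ _ (Finset.mem_univ i)).symm
      rw [Finset.erase_eq] at hesum
      have hsum : ∑ j, Function.update T.γ i (T.γ i + 1) j = (∑ j, T.γ j) + 1 := by
        rw [Finset.sum_update_of_mem (Finset.mem_univ i)]
        omega
      rw [hsum]
      push_cast at hw ⊢
      linarith
    · cases h

lemma wt_derivL {L : List (Term d)} {w : ℝ} (hL : ∀ T ∈ L, T.wt w) (i : Fin d) :
    ∀ T' ∈ derivL i L, T'.wt (w - 1) := by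
  intro T' hT'
  rw [derivL, List.mem_flatMap] at hT'
  obtain ⟨T, hT, hT'⟩ := hT'
  exact wt_derivTerm (hL T hT) i T' hT'

lemma main (s : Finset (Fin d)) (L : List (Term d)) :
    ∃ L' : List (Term d),
      (∀ w : ℝ, (∀ T ∈ L, T.wt w) → ∀ T ∈ L', T.wt (w - s.card)) ∧
      ∀ x : Fin d → ℝ,
        (∀ z : Fin d → ℝ, (∀ i, z i ∈ Icc (x i) (x i + (s.card : ℝ))) → 0 < N z) →
        ∃ ξ : Fin d → ℝ, (∀ i, ξ i ∈ Icc (x i) (x i + (s.card : ℝ))) ∧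
          D s (evalL L) x = evalL L' ξ := by
  induction s using Finset.induction_on generalizing L with
  | empty =>
      refine ⟨L, ?_, ?_⟩
      · intro w hw T hT; simpa using hw T hT
      · intro x _
        refine ⟨x, fun i => ?_, by rw [D_empty]⟩
        simp
  | @insert a s ha ih =>
      obtain ⟨L', hwt, hpt⟩ := ih (derivL a L)
      refine ⟨L', ?_, ?_⟩
      · intro w hw T hT
        have h2 := hwt (w - 1) (wt_derivL hw a) T hT
        have harg : w - ((insert a s).card : ℝ) = w - 1 - s.card := by
          rw [Finset.card_insert_of_notMem ha]; push_cast; ring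
        rw [harg]; exact h2
      · intro x hpos
        have hcard : ((insert a s).card : ℝ) = s.card + 1 := by
          rw [Finset.card_insert_of_notMem ha]; push_cast; ring
        have hpos1 : ∀ z : Fin d → ℝ, (∀ i, z i ∈ Icc (x i) (x i + 1)) → 0 < N z := by
          intro z hz
          apply hpos
          intro i
          have := hz i
          have hc : (1:ℝ) ≤ ((insert a s).card : ℝ) := by
            rw [hcard]
            have h0 : (0:ℝ) ≤ (s.card : ℝ) := Nat.cast_nonneg _
            linarith
          exact ⟨this.1, le_trans this.2 (by linarith [this.1, hc])⟩
        obtain ⟨t, ht, heq⟩ := step ha L x hpos1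
        set x' := Function.update x a (x a + t) with hx'
        have hbox : ∀ i, x i ≤ x' i ∧ x' i + (s.card : ℝ) ≤ x i + ((insert a s).card : ℝ) := by
          intro i
          by_cases hi : i = a
          · subst hi
            rw [hx', Function.update_self, hcard]
            constructor <;> linarith [ht.1, ht.2]
          · rw [hx', Function.update_of_ne hi, hcard]
            exact ⟨le_refl _, by linarith⟩
        have hpos2 : ∀ z : Fin d → ℝ,
            (∀ i, z i ∈ Icc (x' i) (x' i + (s.card : ℝ))) → 0 < N z := by
          intro z hz
          apply hpos
          intro i
          have h1 := hz i
          have h2 := hbox i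
          exact ⟨le_trans h2.1 h1.1, le_trans h1.2 h2.2⟩
        obtain ⟨ξ, hξ, hval⟩ := hpt x' hpos2
        refine ⟨ξ, fun i => ?_, by rw [heq, hval]⟩
        have h1 := hξ i
        have h2 := hbox i
        exact ⟨le_trans h2.1 h1.1, le_trans h1.2 h2.2⟩
lemma euclNorm_eq_sqrt_N (x : Fin d → ℝ) : euclNorm x = Real.sqrt (N x) := rfl
lemma euclNorm_nonneg (x : Fin d → ℝ) : 0 ≤ euclNorm x := Real.sqrt_nonneg _
lemma sq_euclNorm (x : Fin d → ℝ) : euclNorm x ^ 2 = N x :=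
  Real.sq_sqrt (N_nonneg x)
lemma abs_le_euclNorm (x : Fin d → ℝ) (i : Fin d) : |x i| ≤ euclNorm x := by
  rw [euclNorm_eq_sqrt_N, ← Real.sqrt_sq_eq_abs]
  apply Real.sqrt_le_sqrt
  exact Finset.single_le_sum (f := fun j => x j ^ 2) (fun j _ => sq_nonneg _) (Finset.mem_univ i)
def En (x : Fin d → ℝ) : EuclideanSpace ℝ (Fin d) := WithLp.toLp 2 x
lemma euclNorm_norm (x : Fin d → ℝ) : euclNorm x = ‖En x‖ := by
  rw [EuclideanSpace.norm_eq]
  simp only [euclNorm]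
  congr 1
  apply Finset.sum_congr rfl
  intro i _
  rw [show ‖En x i‖ = |x i| from rfl, sq_abs]
lemma euclNorm_add_ge (x v : Fin d → ℝ) :
    euclNorm x - euclNorm v ≤ euclNorm (x + v) := by
  rw [euclNorm_norm x, euclNorm_norm v, euclNorm_norm (x + v)]
  have key : En (x + v) + (-(En v)) = En x := by
    ext i
    show (x + v) i + (-(v i)) = x i
    simp
  have h := norm_add_le (En (x + v)) (-(En v))
  rw [key, norm_neg] at h
  linarith

lemma euclNorm_box_le (v : Fin d → ℝ) (m : ℝ) (hm : 0 ≤ m)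
    (hv : ∀ i, v i ∈ Icc 0 m) : euclNorm v ≤ (d : ℝ) * m := by
  rw [euclNorm]
  have h1 : ∑ i, v i ^ 2 ≤ ∑ _i : Fin d, m ^ 2 := by
    apply Finset.sum_le_sum
    intro i _
    have := hv i
    nlinarith [this.1, this.2]
  have h2 : (∑ _i : Fin d, m ^ 2) = d * m ^ 2 := by simp
  calc Real.sqrt (∑ i, v i ^ 2) ≤ Real.sqrt ((d:ℝ) * m ^ 2) := by
        apply Real.sqrt_le_sqrt; rw [← h2]; exact h1
    _ ≤ Real.sqrt (((d:ℝ) * m) ^ 2) := by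
        apply Real.sqrt_le_sqrt
        have hd : (0:ℝ) ≤ d := Nat.cast_nonneg _
        have hdd : (d:ℝ) ≤ (d:ℝ)^2 := by
          have : d ≤ d ^ 2 := Nat.le_self_pow two_ne_zero d
          exact_mod_cast this
        nlinarith [sq_nonneg m]
    _ = |(d:ℝ) * m| := Real.sqrt_sq_eq_abs _
    _ = (d:ℝ) * m := abs_of_nonneg (by positivity)

lemma term_bound (T : Term d) (w : ℝ) (hT : T.wt w) (x : Fin d → ℝ)
    (hx : 1 ≤ euclNorm x) : |T.eval x| ≤ |T.a| * euclNorm x ^ w := by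
  set e := euclNorm x with he
  have he0 : 0 < e := lt_of_lt_of_le one_pos hx
  rcases hT with h0 | hw
  · simp [Term.eval, h0, Real.rpow_natCast]
  · have hprod : |∏ i, x i ^ T.γ i| ≤ e ^ (∑ i, T.γ i) := by
      rw [abs_prod, ← Finset.prod_pow_eq_pow_sum]
      apply Finset.prod_le_prod
      · intro i _; positivity
      · intro i _
        rw [abs_pow]
        exact pow_le_pow_left₀ (abs_nonneg _) (abs_le_euclNorm x i) _
    have hN : N x ^ T.β = e ^ (2 * T.β) := by
      rw [← sq_euclNorm x, ← he, ← Real.rpow_natCast e 2, ← Real.rpow_mul (le_of_lt he0)]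
      norm_num
    have : |T.eval x| = |T.a| * |∏ i, x i ^ T.γ i| * N x ^ T.β := by
      rw [Term.eval, abs_mul, abs_mul, abs_of_nonneg (Real.rpow_nonneg (N_nonneg x) _)]
    rw [this, hN, ← hw]
    calc |T.a| * |∏ i, x i ^ T.γ i| * e ^ (2 * T.β)
        ≤ |T.a| * e ^ (∑ i, T.γ i) * e ^ (2 * T.β) := by
          apply mul_le_mul_of_nonneg_right _ (Real.rpow_nonneg (le_of_lt he0) _)
          exact mul_le_mul_of_nonneg_left hprod (abs_nonneg _)
      _ = |T.a| * e ^ (((∑ i, T.γ i : ℕ) : ℝ) + 2 * T.β) := by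
          rw [Real.rpow_add he0, ← Real.rpow_natCast e (∑ i, T.γ i)]
          ring

lemma evalL_bound (L : List (Term d)) (w : ℝ) (hL : ∀ T ∈ L, T.wt w) (x : Fin d → ℝ)
    (hx : 1 ≤ euclNorm x) :
    |evalL L x| ≤ (L.map (fun T => |T.a|)).sum * euclNorm x ^ w := by
  induction L with
  | nil => simp [evalL]
  | cons T L ih =>
      have h1 : |evalL (T :: L) x| ≤ |T.eval x| + |evalL L x| := by
        simp only [evalL, List.map_cons, List.sum_cons]
        exact abs_add_le _ _
      have h2 := term_bound T w (hL T List.mem_cons_self) x hx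
      have h3 := ih (fun T' hT' => hL T' (List.mem_cons_of_mem _ hT'))
      simp only [List.map_cons, List.sum_cons]
      calc |evalL (T :: L) x| ≤ |T.eval x| + |evalL L x| := h1
        _ ≤ |T.a| * euclNorm x ^ w + (L.map (fun T => |T.a|)).sum * euclNorm x ^ w := by
            linarith
        _ = (|T.a| + (L.map (fun T => |T.a|)).sum) * euclNorm x ^ w := by ring

lemma rinc_eq_D (g : (Fin d → ℝ) → ℝ) (y : Fin d → ℝ) :
    rinc g 1 y = D Finset.univ g y := by
  rw [D, Finset.powerset_univ, rinc]
  apply Fintype.sum_bijective (fun ε : Fin d → Bool => Finset.univ.filter (fun i => ε i))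
  · rw [Function.bijective_iff_has_inverse]
    refine ⟨fun t => fun i => decide (i ∈ t), ?_, ?_⟩
    · intro ε; funext i; simp
    · intro t; ext i; simp
  · intro ε
    have h1 : (fun i => if ε i then (1:ℝ) else 0) = ind (Finset.univ.filter (fun i => ε i)) := by
      funext i; simp [ind]
    rw [h1, Finset.card_univ, Fintype.card_fin]

end RP

/-- For `h(s) = ‖s‖^{dα}` with `α < 1` there are `C, R > 0` with
`|Δ₁h(y)| ≤ C ‖y‖^{d(α−1)}` whenever `‖y‖ ≥ R`. -/
theorem rinc_bound_far (d : ℕ) (α : ℝ) (hα : α < 1)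
    (h : (Fin d → ℝ) → ℝ) (hh : ∀ x, h x = euclNorm x ^ ((d : ℝ) * α)) :
    ∃ C R : ℝ, 0 < C ∧ 0 < R ∧ ∀ y : Fin d → ℝ, R ≤ euclNorm y →
      |rinc h 1 y| ≤ C * euclNorm y ^ ((d : ℝ) * (α - 1)) := by
  rcases Nat.eq_zero_or_pos d with hd | hd
  · subst hd
    refine ⟨1, 1, one_pos, one_pos, ?_⟩
    intro y hy
    exfalso
    have : euclNorm y = 0 := by simp [euclNorm]
    linarith
  have hd1 : (1:ℝ) ≤ (d:ℝ) := by exact_mod_cast hd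
  set c : ℝ := (d : ℝ) * α with hc
  set L₀ : List (RP.Term d) := [⟨1, fun _ => 0, c / 2⟩] with hL₀
  have hwt₀ : ∀ T ∈ L₀, T.wt c := by
    intro T hT
    simp only [hL₀, List.mem_singleton] at hT
    subst hT
    right
    simp
    ring
  obtain ⟨L', hwt, hpt⟩ := RP.main Finset.univ L₀
  have hwt' : ∀ T ∈ L', T.wt (c - d) := by
    have := hwt c hwt₀
    simpa [Finset.card_univ] using this
  set A : ℝ := (L'.map (fun T => |T.a|)).sum with hA
  have hA0 : 0 ≤ A := by
    rw [hA]
    apply List.sum_nonneg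
    intro a ha
    rw [List.mem_map] at ha
    obtain ⟨T, _, rfl⟩ := ha
    exact abs_nonneg _
  have hcd : c - (d:ℝ) ≤ 0 := by nlinarith
  refine ⟨(A + 1) * (2:ℝ) ^ ((d:ℝ) - c), 2 * (d:ℝ)^2 + 2, by positivity, by positivity, ?_⟩
  intro y hy
  set e : ℝ := euclNorm y with he
  have he2 : 0 < e / 2 := by nlinarith [sq_nonneg (d:ℝ)]
  -- points in the box have norm ≥ e/2
  have hbox : ∀ z : Fin d → ℝ,
      (∀ i, z i ∈ Icc (y i) (y i + ((Finset.univ : Finset (Fin d)).card : ℝ))) →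
      e / 2 ≤ euclNorm z := by
    intro z hz
    have hcard : (((Finset.univ : Finset (Fin d)).card : ℝ)) = (d:ℝ) := by
      rw [Finset.card_univ, Fintype.card_fin]
    set v : Fin d → ℝ := z - y with hv
    have hzv : z = y + v := by funext i; simp [hv]
    have hvbox : ∀ i, v i ∈ Icc 0 (d:ℝ) := by
      intro i
      have := hz i
      rw [hcard] at this
      constructor
      · simp [hv]; linarith [this.1]
      · simp [hv]; linarith [this.2]
    have hvle : euclNorm v ≤ (d:ℝ) * (d:ℝ) :=
      RP.euclNorm_box_le v (d:ℝ) (by linarith) hvbox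
    have htri := RP.euclNorm_add_ge y v
    rw [← hzv] at htri
    have : 2 * (d:ℝ)^2 + 2 ≤ e := hy
    nlinarith
  have hpos : ∀ z : Fin d → ℝ,
      (∀ i, z i ∈ Icc (y i) (y i + ((Finset.univ : Finset (Fin d)).card : ℝ))) →
      0 < RP.N z := by
    intro z hz
    have h1 := hbox z hz
    have := RP.sq_euclNorm z
    nlinarith
  obtain ⟨ξ, hξ, hval⟩ := hpt y hpos
  -- h agrees with evalL L₀
  have hagree : ∀ z : Fin d → ℝ, h z = RP.evalL L₀ z := by
    intro z
    rw [hh z, hL₀]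
    simp only [RP.evalL, List.map_cons, List.map_nil, List.sum_cons, List.sum_nil, add_zero]
    rw [RP.Term.eval]
    simp only [pow_zero, Finset.prod_const_one, one_mul, mul_one]
    rw [RP.euclNorm_eq_sqrt_N, Real.sqrt_eq_rpow, ← Real.rpow_mul (RP.N_nonneg z)]
    congr 1
    ring
  have hrinc : rinc h 1 y = RP.evalL L' ξ := by
    have h1 : rinc h 1 y = rinc (RP.evalL L₀) 1 y := by
      rw [rinc, rinc]
      apply Finset.sum_congr rfl
      intro ε _
      rw [hagree]
    rw [h1, RP.rinc_eq_D, hval]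
  have hξe : e / 2 ≤ euclNorm ξ := hbox ξ hξ
  have hξ1 : 1 ≤ euclNorm ξ := by nlinarith [sq_nonneg ((d:ℝ) - 1)]
  have hb := RP.evalL_bound L' (c - d) hwt' ξ hξ1
  rw [hrinc]
  have hmono : euclNorm ξ ^ (c - (d:ℝ)) ≤ (e / 2) ^ (c - (d:ℝ)) :=
    Real.rpow_le_rpow_of_nonpos he2 hξe hcd
  have hsplit : (e / 2) ^ (c - (d:ℝ)) = e ^ (c - (d:ℝ)) * (2:ℝ) ^ ((d:ℝ) - c) := by
    rw [Real.div_rpow (by linarith : (0:ℝ) ≤ e) (by norm_num : (0:ℝ) ≤ 2)]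
    rw [show (d:ℝ) - c = -(c - (d:ℝ)) by ring, Real.rpow_neg (by norm_num : (0:ℝ) ≤ 2)]
    ring
  have hexp : (d:ℝ) * (α - 1) = c - (d:ℝ) := by rw [hc]; ring
  rw [hexp]
  calc |RP.evalL L' ξ| ≤ A * euclNorm ξ ^ (c - (d:ℝ)) := hb
    _ ≤ A * ((e / 2) ^ (c - (d:ℝ))) := by
        apply mul_le_mul_of_nonneg_left hmono hA0
    _ = A * (2:ℝ) ^ ((d:ℝ) - c) * e ^ (c - (d:ℝ)) := by rw [hsplit]; ring
    _ ≤ (A + 1) * (2:ℝ) ^ ((d:ℝ) - c) * e ^ (c - (d:ℝ)) := by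
        have h2 : (0:ℝ) < (2:ℝ) ^ ((d:ℝ) - c) := Real.rpow_pos_of_pos (by norm_num) _
        have h3 : (0:ℝ) ≤ e ^ (c - (d:ℝ)) := Real.rpow_nonneg (by linarith) _
        nlinarith
end
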